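/- Let g₁, …, gₙ ∈ {0,1}. Then exp(iπ ∑_{1≤i<j≤n} g_i g_j) = (1/√2) ∑_{h∈{0,1}} exp(i(π/2)(1−2h) ∑_{i=1}^n g_i − i(π/4)(1−2h)). -/

import Mathlib

open Complex

lemma ESL_sum_pairs {n : ℕ} (a : Fin n → ℂ) (ha : ∀ i, a i * a i = a i) :
    2 * ∑ p ∈ Finset.univ.filter (fun p : Fin n × Fin n => p.1 < p.2), a p.1 * a p.2
      = (∑ i, a i)^2 - ∑ i, a i := by
  classical
  have htot : (∑ i, a i)^2 = ∑ p ∈ (Finset.univ : Finset (Fin n × Fin n)), a p.1 * a p.2 := by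
    rw [sq, Finset.sum_mul_sum, ← Finset.sum_product']; rfl
  have hsplit := Finset.sum_filter_add_sum_filter_not (Finset.univ : Finset (Fin n × Fin n))
    (fun p => p.1 < p.2) (fun p => a p.1 * a p.2)
  have hsplit2 := Finset.sum_filter_add_sum_filter_not
    ((Finset.univ : Finset (Fin n × Fin n)).filter (fun p => ¬ p.1 < p.2))
    (fun p => p.2 < p.1) (fun p => a p.1 * a p.2)
  have hswap : ∑ p ∈ (Finset.univ.filter (fun p : Fin n × Fin n => ¬ p.1 < p.2)).filter
      (fun p => p.2 < p.1), a p.1 * a p.2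
      = ∑ p ∈ Finset.univ.filter (fun p : Fin n × Fin n => p.1 < p.2), a p.1 * a p.2 := by
    apply Finset.sum_nbij' (fun p => Prod.swap p) (fun p => Prod.swap p) <;>
      simp +contextual [lt_asymm, le_of_lt, mul_comm]
  have hdiag : ∑ p ∈ (Finset.univ.filter (fun p : Fin n × Fin n => ¬ p.1 < p.2)).filter
      (fun p => ¬ p.2 < p.1), a p.1 * a p.2 = ∑ i, a i := by
    rw [Finset.filter_filter]
    rw [show ((Finset.univ : Finset (Fin n × Fin n)).filter (fun p => ¬ p.1 < p.2 ∧ ¬ p.2 < p.1))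
        = (Finset.univ : Finset (Fin n)).image (fun i => (i, i)) by
      ext p
      simp only [Finset.mem_filter, Finset.mem_image, Finset.mem_univ, true_and, not_lt]
      constructor
      · rintro ⟨h1, h2⟩
        exact ⟨p.1, by ext <;> simp [le_antisymm h2 h1]⟩
      · rintro ⟨i, rfl⟩; simp]
    rw [Finset.sum_image (by intro i _ j _ h; exact congrArg Prod.fst h)]
    simp [ha]
  linear_combination -htot + hsplit + hsplit2 - hswap - hdiag

noncomputable def ESL_Pm (m : ℕ) : Prop :=
    Complex.exp ((Real.pi : ℂ) * Complex.I * (((m:ℂ)^2 - m)/2)) =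
      (1 / (Real.sqrt 2 : ℂ)) *
        (Complex.exp (Complex.I * ((Real.pi : ℂ)/2) * m - Complex.I * ((Real.pi : ℂ)/4))
          + Complex.exp (-(Complex.I * ((Real.pi : ℂ)/2) * m) + Complex.I * ((Real.pi : ℂ)/4)))

lemma ESL_step (m : ℕ) (h : ESL_Pm m) : ESL_Pm (m + 4) := by
  unfold ESL_Pm at *
  have h2 : Complex.exp (2*(Real.pi:ℂ)*I) = 1 := Complex.exp_two_pi_mul_I
  have h3 : Complex.exp (-(2*(Real.pi:ℂ)*I)) = 1 := by rw [Complex.exp_neg, h2]; norm_num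
  have h1 : Complex.exp ((2*(m:ℂ)+3) * (2*(Real.pi:ℂ)*I)) = 1 := by
    rw [show ((2*(m:ℂ)+3)) = ((2*m+3:ℕ):ℂ) by push_cast; ring, Complex.exp_nat_mul, h2, one_pow]
  push_cast
  rw [show (Real.pi:ℂ) * I * ((((m:ℂ)+4)^2 - ((m:ℂ)+4))/2)
      = (Real.pi:ℂ) * I * (((m:ℂ)^2 - m)/2) + (2*(m:ℂ)+3) * (2*(Real.pi:ℂ)*I) by ring,
    Complex.exp_add, h1, mul_one,
    show I * ((Real.pi:ℂ)/2) * ((m:ℂ)+4) - I * ((Real.pi:ℂ)/4)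
      = (I * ((Real.pi:ℂ)/2) * m - I * ((Real.pi:ℂ)/4)) + 2*(Real.pi:ℂ)*I by ring,
    show -(I * ((Real.pi:ℂ)/2) * ((m:ℂ)+4)) + I * ((Real.pi:ℂ)/4)
      = (-(I * ((Real.pi:ℂ)/2) * m) + I * ((Real.pi:ℂ)/4)) + -(2*(Real.pi:ℂ)*I) by ring,
    Complex.exp_add, Complex.exp_add, h2, h3, mul_one, mul_one]
  exact h

lemma ESL_hcplus : Complex.exp (I * ((Real.pi:ℂ)/4)) = (Real.sqrt 2)/2 + (Real.sqrt 2)/2 * I := by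
  rw [mul_comm, show ((Real.pi:ℂ)/4) = ((Real.pi/4 : ℝ) : ℂ) by push_cast; ring, exp_mul_I]
  norm_cast
  rw [Real.cos_pi_div_four, Real.sin_pi_div_four]

lemma ESL_hcminus :
    Complex.exp (-(I * ((Real.pi:ℂ)/4))) = (Real.sqrt 2)/2 - (Real.sqrt 2)/2 * I := by
  rw [show -(I * ((Real.pi:ℂ)/4)) = ((-(Real.pi/4) : ℝ) : ℂ) * I by push_cast; ring, exp_mul_I]
  norm_cast
  rw [Real.cos_neg, Real.sin_neg, Real.cos_pi_div_four, Real.sin_pi_div_four]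
  push_cast; ring

lemma ESL_base (r : ℕ) (hr : r < 4) : ESL_Pm r := by
  have hs2 : (Real.sqrt 2:ℂ) * (Real.sqrt 2:ℂ) = 2 := by
    have h := Real.mul_self_sqrt (by norm_num : (0:ℝ) ≤ 2)
    exact_mod_cast congrArg (fun x : ℝ => (x:ℂ)) h
  have hne : (Real.sqrt 2:ℂ) ≠ 0 := by
    intro h; rw [h] at hs2; norm_num at hs2
  have hpin : Complex.exp (-((Real.pi:ℂ) * I)) = -1 := by
    rw [Complex.exp_neg, Complex.exp_pi_mul_I]; norm_num
  interval_cases r <;> unfold ESL_Pm <;> push_cast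
  · rw [show (Real.pi:ℂ) * I * (((0:ℂ)^2 - 0)/2) = 0 by ring, Complex.exp_zero,
      show I * ((Real.pi:ℂ)/2) * 0 - I * ((Real.pi:ℂ)/4) = -(I * ((Real.pi:ℂ)/4)) by ring,
      show -(I * ((Real.pi:ℂ)/2) * 0) + I * ((Real.pi:ℂ)/4) = I * ((Real.pi:ℂ)/4) by ring,
      ESL_hcplus, ESL_hcminus]
    field_simp
    ring
  · rw [show (Real.pi:ℂ) * I * (((1:ℂ)^2 - 1)/2) = 0 by ring, Complex.exp_zero,
      show I * ((Real.pi:ℂ)/2) * 1 - I * ((Real.pi:ℂ)/4) = I * ((Real.pi:ℂ)/4) by ring,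
      show -(I * ((Real.pi:ℂ)/2) * 1) + I * ((Real.pi:ℂ)/4) = -(I * ((Real.pi:ℂ)/4)) by ring,
      ESL_hcplus, ESL_hcminus]
    field_simp
    ring
  · rw [show (Real.pi:ℂ) * I * (((2:ℂ)^2 - 2)/2) = (Real.pi:ℂ) * I by ring,
      Complex.exp_pi_mul_I,
      show I * ((Real.pi:ℂ)/2) * 2 - I * ((Real.pi:ℂ)/4)
        = (Real.pi:ℂ) * I + -(I * ((Real.pi:ℂ)/4)) by ring,
      show -(I * ((Real.pi:ℂ)/2) * 2) + I * ((Real.pi:ℂ)/4)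
        = -((Real.pi:ℂ) * I) + I * ((Real.pi:ℂ)/4) by ring,
      Complex.exp_add, Complex.exp_add, Complex.exp_pi_mul_I, hpin, ESL_hcplus, ESL_hcminus]
    field_simp
    ring
  · rw [show (Real.pi:ℂ) * I * (((3:ℂ)^2 - 3)/2) = (Real.pi:ℂ) * I + 2*(Real.pi:ℂ)*I by ring,
      Complex.exp_add, Complex.exp_pi_mul_I, Complex.exp_two_pi_mul_I,
      show I * ((Real.pi:ℂ)/2) * 3 - I * ((Real.pi:ℂ)/4)
        = (Real.pi:ℂ) * I + I * ((Real.pi:ℂ)/4) by ring,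
      show -(I * ((Real.pi:ℂ)/2) * 3) + I * ((Real.pi:ℂ)/4)
        = -((Real.pi:ℂ) * I) + -(I * ((Real.pi:ℂ)/4)) by ring,
      Complex.exp_add, Complex.exp_add, Complex.exp_pi_mul_I, hpin, ESL_hcplus, ESL_hcminus]
    field_simp
    ring

lemma ESL_key (m : ℕ) : ESL_Pm m := by
  have h : ∀ q r, r < 4 → ESL_Pm (4 * q + r) := by
    intro q
    induction q with
    | zero => intro r hr; simpa using ESL_base r hr
    | succ q ih =>
      intro r hr
      have : 4 * (q + 1) + r = (4 * q + r) + 4 := by ring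
      rw [this]
      exact ESL_step _ (ih r hr)
  have := h (m / 4) (m % 4) (Nat.mod_lt _ (by norm_num))
  rwa [Nat.div_add_mod] at this

/-- Linearization of the symmetric quadratic expression in binary variables via one
hidden binary spin. -/
theorem exp_sym_linearize (n : ℕ) (g : Fin n → Fin 2) :
    Complex.exp ((Real.pi : ℂ) * Complex.I *
        ∑ p ∈ Finset.univ.filter (fun p : Fin n × Fin n => p.1 < p.2),
          ((g p.1 : ℕ) : ℂ) * ((g p.2 : ℕ) : ℂ)) =
      (1 / (Real.sqrt 2 : ℂ)) *
        ∑ h : Fin 2,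
          Complex.exp (Complex.I * ((Real.pi : ℂ) / 2) * (1 - 2 * ((h : ℕ) : ℂ)) *
              (∑ i, ((g i : ℕ) : ℂ))
            - Complex.I * ((Real.pi : ℂ) / 4) * (1 - 2 * ((h : ℕ) : ℂ))) := by
  have ha : ∀ i : Fin n, ((g i : ℕ) : ℂ) * ((g i : ℕ) : ℂ) = ((g i : ℕ) : ℂ) := by
    intro i
    have h : (g i : ℕ) = 0 ∨ (g i : ℕ) = 1 := by omega
    rcases h with h | h <;> rw [h] <;> norm_num
  set m : ℕ := ∑ i, (g i : ℕ) with hm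
  have hS : (∑ i, ((g i : ℕ) : ℂ)) = (m : ℂ) := by rw [hm]; push_cast; rfl
  have hT := ESL_sum_pairs (fun i => ((g i : ℕ) : ℂ)) ha
  rw [hS] at hT
  have hT2 : (∑ p ∈ Finset.univ.filter (fun p : Fin n × Fin n => p.1 < p.2),
      ((g p.1 : ℕ) : ℂ) * ((g p.2 : ℕ) : ℂ)) = ((m:ℂ)^2 - m)/2 := by
    linear_combination hT / 2
  rw [hT2, Fin.sum_univ_two, hS]
  have hk := ESL_key m
  unfold ESL_Pm at hk
  rw [hk]
  norm_num
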